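/- Let $p \geq 0$ and let $v_1, v_2 : \mathbb{R} \to \mathbb{R}$ be polynomials of degree at most $p$. Then there exists a constant $C > 0$ depending only on $p$ such that for every $h > 0$, $\int_0^h v_1(x)^2\,dx \leq C \Big( \int_{-h}^0 v_2(x)^2\,dx + \sum_{j=0}^{p} h^{2j+1} \big(v_1^{(j)}(0) - v_2^{(j)}(0)\big)^2 \Big)$. -/

import Mathlib

open Polynomial Finset MeasureTheory

noncomputable def Gq (n : ℕ) (c : Fin n → ℝ) : ℝ :=
  ∑ i : Fin n, ∑ j : Fin n, c i * c j / ((i : ℕ) + (j : ℕ) + 1 : ℝ)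

lemma integral_sq_eq (n : ℕ) (v : Polynomial ℝ) (hv : v.natDegree < n) (a b : ℝ) :
    (∫ x in a..b, (v.eval x) ^ 2) =
      ∑ i : Fin n, ∑ j : Fin n, v.coeff i * v.coeff j *
        ((b ^ ((i : ℕ) + (j : ℕ) + 1) - a ^ ((i : ℕ) + (j : ℕ) + 1)) /
          ((i : ℕ) + (j : ℕ) + 1 : ℝ)) := by
  have hev : ∀ x : ℝ, (v.eval x) ^ 2 =
      ∑ i : Fin n, ∑ j : Fin n, v.coeff i * v.coeff j * x ^ ((i : ℕ) + (j : ℕ)) := by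
    intro x
    rw [Polynomial.eval_eq_sum_range' hv, ← Fin.sum_univ_eq_sum_range, sq, Finset.sum_mul_sum]
    refine Finset.sum_congr rfl fun i _ => Finset.sum_congr rfl fun j _ => ?_
    rw [pow_add]; ring
  simp only [hev]
  rw [intervalIntegral.integral_finset_sum]
  · refine Finset.sum_congr rfl fun i _ => ?_
    rw [intervalIntegral.integral_finset_sum]
    · refine Finset.sum_congr rfl fun j _ => ?_
      rw [intervalIntegral.integral_const_mul, integral_pow]
      push_cast; ring
    · intro j _
      exact (continuous_const.mul (continuous_pow _)).intervalIntegrable _ _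
  · intro i _
    apply Continuous.intervalIntegrable
    exact continuous_finset_sum _ fun j _ => continuous_const.mul (continuous_pow _)

lemma integral_sq_right (n : ℕ) (v : Polynomial ℝ) (hv : v.natDegree < n) (h : ℝ) :
    (∫ x in (0:ℝ)..h, (v.eval x) ^ 2) = h * Gq n (fun i => h ^ (i : ℕ) * v.coeff i) := by
  rw [integral_sq_eq n v hv, Gq, Finset.mul_sum]
  refine Finset.sum_congr rfl fun i _ => ?_
  rw [Finset.mul_sum]
  refine Finset.sum_congr rfl fun j _ => ?_
  rw [zero_pow (by omega), pow_add, pow_add, pow_one]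
  ring

lemma integral_sq_left (n : ℕ) (v : Polynomial ℝ) (hv : v.natDegree < n) (h : ℝ) :
    (∫ x in (-h)..(0:ℝ), (v.eval x) ^ 2) = h * Gq n (fun i => (-h) ^ (i : ℕ) * v.coeff i) := by
  rw [integral_sq_eq n v hv, Gq, Finset.mul_sum]
  refine Finset.sum_congr rfl fun i _ => ?_
  rw [Finset.mul_sum]
  refine Finset.sum_congr rfl fun j _ => ?_
  rw [zero_pow (by omega), pow_add, pow_add, pow_one]
  ring

lemma coeff_mk (n : ℕ) (c : Fin n → ℝ) (i : Fin n) :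
    (∑ k : Fin n, C (c k) * X ^ (k : ℕ)).coeff (i : ℕ) = c i := by
  rw [Polynomial.finset_sum_coeff]
  rw [Finset.sum_eq_single i]
  · simp
  · intro k _ hk
    have : ((i : ℕ) = (k : ℕ)) → False := fun h => hk (Fin.ext h.symm)
    simp only [Polynomial.coeff_C_mul, Polynomial.coeff_X_pow]
    rw [if_neg this, mul_zero]
  · simp

lemma natDegree_mk (n : ℕ) (c : Fin n → ℝ) :
    (∑ k : Fin n, C (c k) * X ^ (k : ℕ)).natDegree < n ∨
      (∑ k : Fin n, C (c k) * X ^ (k : ℕ)) = 0 := by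
  rcases eq_or_ne (∑ k : Fin n, C (c k) * X ^ (k : ℕ)) 0 with h | h
  · exact Or.inr h
  refine Or.inl ?_
  have h1 : (∑ k : Fin n, C (c k) * X ^ (k : ℕ)).natDegree ≤ n - 1 := by
    apply Polynomial.natDegree_sum_le_of_forall_le
    intro k _
    exact le_trans (Polynomial.natDegree_C_mul_le _ _)
      (by simpa using Nat.le_sub_one_of_lt k.isLt)
  have hn : 0 < n := by
    rcases Nat.eq_zero_or_pos n with h0 | h0
    · subst h0; simp at h
    · exact h0
  omega

lemma Gq_pos (n : ℕ) (c : Fin n → ℝ) (hc : c ≠ 0) : 0 < Gq n c := by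
  set q : Polynomial ℝ := ∑ k : Fin n, C (c k) * X ^ (k : ℕ) with hq
  have hcoeff : ∀ i : Fin n, q.coeff (i : ℕ) = c i := coeff_mk n c
  have hq0 : q ≠ 0 := by
    intro h0
    apply hc
    funext i
    have := hcoeff i
    rw [h0] at this
    simpa using this.symm
  have hdeg : q.natDegree < n := by
    rcases natDegree_mk n c with h | h
    · exact h
    · exact absurd h hq0
  have key : (∫ x in (0:ℝ)..1, (q.eval x) ^ 2) = Gq n c := by
    rw [integral_sq_right n q hdeg 1]
    simp [hcoeff]
  rw [← key, intervalIntegral.integral_pos_iff_support_of_nonneg_ae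
    (Filter.Eventually.of_forall fun x => sq_nonneg _)
    ((q.continuous.pow 2).intervalIntegrable _ _)]
  refine ⟨one_pos, ?_⟩
  have hroots : {x : ℝ | q.IsRoot x}.Finite := by
    by_contra hfin
    exact hq0 (q.eq_zero_of_infinite_isRoot hfin)
  have hsub : Set.Ioc (0:ℝ) 1 \ {x : ℝ | q.IsRoot x} ⊆
      (Function.support fun x => q.eval x ^ 2) ∩ Set.Ioc 0 1 := by
    rintro x ⟨hx1, hx2⟩
    refine ⟨?_, hx1⟩
    simp only [Function.mem_support]
    intro h0
    exact hx2 (by simpa [Polynomial.IsRoot] using pow_eq_zero_iff (n := 2) (by norm_num) |>.mp h0)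
  calc (0 : ENNReal) < volume (Set.Ioc (0:ℝ) 1) := by simp
    _ = volume (Set.Ioc (0:ℝ) 1 \ {x : ℝ | q.IsRoot x}) :=
        (measure_diff_null (hroots.measure_zero _)).symm
    _ ≤ _ := measure_mono hsub

lemma Gq_smul (n : ℕ) (t : ℝ) (c : Fin n → ℝ) : Gq n (t • c) = t ^ 2 * Gq n c := by
  simp only [Gq, Finset.mul_sum]
  refine Finset.sum_congr rfl fun i _ => Finset.sum_congr rfl fun j _ => ?_
  simp only [Pi.smul_apply, smul_eq_mul]
  ring

lemma Gq_continuous (n : ℕ) : Continuous (Gq n) := by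
  refine continuous_finset_sum _ fun i _ => continuous_finset_sum _ fun j _ => ?_
  exact ((continuous_apply i).mul (continuous_apply j)).div_const _

lemma Gq_compare (n : ℕ) (hn : 0 < n) :
    ∃ C > (0:ℝ), ∀ c : Fin n → ℝ, Gq n c ≤ C * Gq n (fun i => (-1:ℝ) ^ (i:ℕ) * c i) := by
  haveI : Nonempty (Fin n) := ⟨⟨0, hn⟩⟩
  set alt : (Fin n → ℝ) → (Fin n → ℝ) := fun c i => (-1:ℝ) ^ (i:ℕ) * c i with halt
  have haltc : Continuous alt := by
    refine continuous_pi fun i => ?_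
    exact continuous_const.mul (continuous_apply i)
  have halt0 : ∀ c : Fin n → ℝ, c ≠ 0 → alt c ≠ 0 := by
    intro c hc h0
    apply hc
    funext i
    have : (-1:ℝ) ^ (i:ℕ) * c i = 0 := congrFun h0 i
    simpa [pow_ne_zero] using this
  have haltsmul : ∀ (t : ℝ) (c : Fin n → ℝ), alt (t • c) = t • alt c := by
    intro t c; funext i; simp only [halt, Pi.smul_apply, smul_eq_mul]; ring
  set S : Set (Fin n → ℝ) := Metric.sphere 0 1 with hS
  have hScomp : IsCompact S := isCompact_sphere 0 1
  have hSne : S.Nonempty := NormedSpace.sphere_nonempty.mpr zero_le_one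
  obtain ⟨uM, huMS, huM⟩ := hScomp.exists_isMaxOn hSne (Gq_continuous n).continuousOn
  obtain ⟨um, humS, hum⟩ := hScomp.exists_isMinOn hSne
    ((Gq_continuous n).comp haltc).continuousOn
  have hne : ∀ u ∈ S, u ≠ 0 := by
    intro u hu h0
    rw [hS, mem_sphere_iff_norm] at hu
    rw [h0] at hu; simp at hu
  have hM : 0 < Gq n uM := lt_of_lt_of_le (Gq_pos n uM (hne uM huMS)) (le_refl _)
  have hm : 0 < Gq n (alt um) := Gq_pos n (alt um) (halt0 um (hne um humS))
  refine ⟨Gq n uM / Gq n (alt um), div_pos hM hm, ?_⟩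
  intro c
  rcases eq_or_ne c 0 with rfl | hc
  · have : alt (0 : Fin n → ℝ) = 0 := by funext i; simp [halt]
    simp [Gq, this]
  · have hcn : (0:ℝ) < ‖c‖ := norm_pos_iff.mpr hc
    set u : Fin n → ℝ := ‖c‖⁻¹ • c with hu
    have huS : u ∈ S := by
      rw [hS, mem_sphere_iff_norm, sub_zero, hu, norm_smul]
      simp [abs_of_pos (inv_pos.mpr hcn), inv_mul_cancel₀ hcn.ne']
    have hcu : c = ‖c‖ • u := by
      rw [hu, smul_smul, mul_inv_cancel₀ hcn.ne', one_smul]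
    have h1 : Gq n c = ‖c‖ ^ 2 * Gq n u := by
      have := Gq_smul n ‖c‖ u; rw [← hcu] at this; exact this
    have h2 : Gq n (alt c) = ‖c‖ ^ 2 * Gq n (alt u) := by
      have := Gq_smul n ‖c‖ (alt u); rw [← haltsmul, ← hcu] at this; exact this
    have h3 : Gq n u ≤ Gq n uM := huM huS
    have h4 : Gq n (alt um) ≤ Gq n (alt u) := hum huS
    show Gq n c ≤ _ * Gq n (alt c)
    rw [h1, h2]
    have key : 0 ≤ (Gq n (alt u) - Gq n (alt um)) * Gq n uM * ‖c‖ ^ 2 :=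
      mul_nonneg (mul_nonneg (sub_nonneg.mpr h4) hM.le) (sq_nonneg _)
    calc ‖c‖ ^ 2 * Gq n u ≤ ‖c‖ ^ 2 * Gq n uM :=
          mul_le_mul_of_nonneg_left h3 (sq_nonneg _)
      _ ≤ Gq n uM / Gq n (alt um) * (‖c‖ ^ 2 * Gq n (alt u)) := by
          rw [div_mul_eq_mul_div, le_div_iff₀ hm]
          nlinarith [key]

lemma Gq_le (n : ℕ) (c : Fin n → ℝ) : Gq n c ≤ n * ∑ i : Fin n, c i ^ 2 := by
  have step : Gq n c ≤ ∑ i : Fin n, ∑ j : Fin n, (c i ^ 2 + c j ^ 2) / 2 := by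
    refine Finset.sum_le_sum fun i _ => Finset.sum_le_sum fun j _ => ?_
    have hd : (1:ℝ) ≤ ((i:ℕ) : ℝ) + ((j:ℕ) : ℝ) + 1 := by
      have : (0:ℝ) ≤ ((i:ℕ) : ℝ) + ((j:ℕ) : ℝ) := by positivity
      linarith
    calc c i * c j / (((i:ℕ) : ℝ) + ((j:ℕ) : ℝ) + 1)
        ≤ |c i * c j| / (((i:ℕ) : ℝ) + ((j:ℕ) : ℝ) + 1) := by
          gcongr; exact le_abs_self _
      _ ≤ |c i * c j| := div_le_self (abs_nonneg _) hd
      _ ≤ (c i ^ 2 + c j ^ 2) / 2 := by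
          rw [abs_mul]
          nlinarith [sq_nonneg (|c i| - |c j|), sq_abs (c i), sq_abs (c j)]
  refine step.trans (le_of_eq ?_)
  simp only [add_div, Finset.sum_add_distrib, Finset.sum_const, Finset.card_univ,
    Fintype.card_fin, nsmul_eq_mul, ← Finset.sum_div, Finset.mul_sum]
  rw [← Finset.mul_sum, ← Finset.sum_div, ← Finset.mul_sum]
  ring

lemma deriv_eval0 (w : Polynomial ℝ) (k : ℕ) :
    (Polynomial.derivative^[k] w).eval 0 = (k.factorial : ℝ) * w.coeff k := by
  rw [← Polynomial.coeff_zero_eq_eval_zero, Polynomial.coeff_iterate_derivative]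
  simp [Nat.descFactorial_self, nsmul_eq_mul]

lemma coeff_sq_le (w : Polynomial ℝ) (k : ℕ) :
    (w.coeff k) ^ 2 ≤ ((Polynomial.derivative^[k] w).eval 0) ^ 2 := by
  rw [deriv_eval0]
  have h1 : (1:ℝ) ≤ (k.factorial : ℝ) := by
    exact_mod_cast Nat.one_le_iff_ne_zero.mpr k.factorial_pos.ne'
  nlinarith [sq_nonneg (w.coeff k), sq_nonneg ((k.factorial : ℝ) - 1)]

theorem stmt_1 (p : ℕ) :
    ∃ C > (0 : ℝ), ∀ v₁ v₂ : Polynomial ℝ, v₁.natDegree ≤ p → v₂.natDegree ≤ p →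
      ∀ h : ℝ, 0 < h →
        (∫ x in (0:ℝ)..h, (v₁.eval x) ^ 2) ≤
          C * ((∫ x in (-h)..(0:ℝ), (v₂.eval x) ^ 2) +
            ∑ j ∈ Finset.range (p + 1),
              h ^ (2 * j + 1) *
                ((Polynomial.derivative^[j] v₁).eval 0 -
                  (Polynomial.derivative^[j] v₂).eval 0) ^ 2) := by
  obtain ⟨C₁, hC₁pos, hC₁⟩ := Gq_compare (p + 1) p.succ_pos
  refine ⟨2 * C₁ + 2 * (p + 1), by positivity, ?_⟩
  intro v₁ v₂ hd₁ hd₂ h hh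
  set w : Polynomial ℝ := v₁ - v₂ with hwdef
  have hdw : w.natDegree < p + 1 :=
    Nat.lt_succ_of_le (le_trans (Polynomial.natDegree_sub_le _ _) (max_le hd₁ hd₂))
  have hd₁' : v₁.natDegree < p + 1 := Nat.lt_succ_of_le hd₁
  have hd₂' : v₂.natDegree < p + 1 := Nat.lt_succ_of_le hd₂
  -- step 1 : split
  have hi₂ : IntervalIntegrable (fun x => (v₂.eval x) ^ 2) volume 0 h :=
    (v₂.continuous.pow 2).intervalIntegrable _ _
  have hiw : IntervalIntegrable (fun x => (w.eval x) ^ 2) volume 0 h :=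
    (w.continuous.pow 2).intervalIntegrable _ _
  have step1 : (∫ x in (0:ℝ)..h, (v₁.eval x) ^ 2) ≤
      2 * (∫ x in (0:ℝ)..h, (v₂.eval x) ^ 2) + 2 * (∫ x in (0:ℝ)..h, (w.eval x) ^ 2) := by
    have hmono : (∫ x in (0:ℝ)..h, (v₁.eval x) ^ 2) ≤
        ∫ x in (0:ℝ)..h, (2 * (v₂.eval x) ^ 2 + 2 * (w.eval x) ^ 2) := by
      apply intervalIntegral.integral_mono_on hh.le
        ((v₁.continuous.pow 2).intervalIntegrable _ _)
        ((hi₂.const_mul 2).add (hiw.const_mul 2))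
      intro x _
      have hev : v₁.eval x = v₂.eval x + w.eval x := by
        simp [hwdef]
      show v₁.eval x ^ 2 ≤ _
      rw [hev]
      nlinarith [sq_nonneg (v₂.eval x - w.eval x)]
    rwa [intervalIntegral.integral_add (hi₂.const_mul 2) (hiw.const_mul 2),
      intervalIntegral.integral_const_mul, intervalIntegral.integral_const_mul] at hmono
  -- step 2 : comparability
  have step2 : (∫ x in (0:ℝ)..h, (v₂.eval x) ^ 2) ≤
      C₁ * ∫ x in (-h)..(0:ℝ), (v₂.eval x) ^ 2 := by
    rw [integral_sq_right (p+1) v₂ hd₂' h, integral_sq_left (p+1) v₂ hd₂' h]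
    have hfun : (fun i : Fin (p+1) => (-h) ^ (i:ℕ) * v₂.coeff i) =
        (fun i : Fin (p+1) => (-1:ℝ) ^ (i:ℕ) * (h ^ (i:ℕ) * v₂.coeff i)) := by
      funext i
      rw [neg_pow]
      ring
    rw [hfun]
    have := hC₁ (fun i : Fin (p+1) => h ^ (i:ℕ) * v₂.coeff i)
    calc h * Gq (p+1) (fun i : Fin (p+1) => h ^ (i:ℕ) * v₂.coeff i)
        ≤ h * (C₁ * Gq (p+1) (fun i : Fin (p+1) =>
            (-1:ℝ) ^ (i:ℕ) * (h ^ (i:ℕ) * v₂.coeff i))) :=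
          mul_le_mul_of_nonneg_left this hh.le
      _ = C₁ * (h * Gq (p+1) (fun i : Fin (p+1) =>
            (-1:ℝ) ^ (i:ℕ) * (h ^ (i:ℕ) * v₂.coeff i))) := by ring
  -- step 3 : jump bound
  have step3 : (∫ x in (0:ℝ)..h, (w.eval x) ^ 2) ≤
      (p + 1) * ∑ j ∈ Finset.range (p + 1), h ^ (2 * j + 1) *
        ((Polynomial.derivative^[j] v₁).eval 0 -
          (Polynomial.derivative^[j] v₂).eval 0) ^ 2 := by
    rw [integral_sq_right (p+1) w hdw h]
    have hGle := Gq_le (p+1) (fun i : Fin (p+1) => h ^ (i:ℕ) * w.coeff i)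
    have hs1 : h * Gq (p+1) (fun i : Fin (p+1) => h ^ (i:ℕ) * w.coeff i) ≤
        h * ((p+1) * ∑ i : Fin (p+1), (h ^ (i:ℕ) * w.coeff i) ^ 2) := by
      apply mul_le_mul_of_nonneg_left _ hh.le
      simpa using hGle
    refine hs1.trans ?_
    have heq : h * ((p+1) * ∑ i : Fin (p+1), (h ^ (i:ℕ) * w.coeff i) ^ 2) =
        (p+1) * ∑ j ∈ Finset.range (p+1), h ^ (2 * j + 1) * (w.coeff j) ^ 2 := by
      rw [Fin.sum_univ_eq_sum_range (fun i => (h ^ i * w.coeff i) ^ 2), Finset.mul_sum,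
        Finset.mul_sum, Finset.mul_sum]
      refine Finset.sum_congr rfl fun j _ => ?_
      rw [pow_add, pow_mul, pow_one]
      ring
    rw [heq]
    apply mul_le_mul_of_nonneg_left _ (by positivity : (0:ℝ) ≤ (p:ℝ)+1)
    refine Finset.sum_le_sum fun j _ => ?_
    have hder : (Polynomial.derivative^[j] w).eval 0 =
        (Polynomial.derivative^[j] v₁).eval 0 - (Polynomial.derivative^[j] v₂).eval 0 := by
      rw [hwdef, Polynomial.iterate_derivative_sub, Polynomial.eval_sub]
    rw [← hder]
    exact mul_le_mul_of_nonneg_left (coeff_sq_le w j) (by positivity)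
  -- combine
  have hX : 0 ≤ ∫ x in (-h)..(0:ℝ), (v₂.eval x) ^ 2 :=
    intervalIntegral.integral_nonneg (by linarith) fun x _ => sq_nonneg _
  have hS : 0 ≤ ∑ j ∈ Finset.range (p + 1), h ^ (2 * j + 1) *
      ((Polynomial.derivative^[j] v₁).eval 0 -
        (Polynomial.derivative^[j] v₂).eval 0) ^ 2 :=
    Finset.sum_nonneg fun j _ => mul_nonneg (by positivity) (sq_nonneg _)
  set X := ∫ x in (-h)..(0:ℝ), (v₂.eval x) ^ 2
  set S := ∑ j ∈ Finset.range (p + 1), h ^ (2 * j + 1) *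
      ((Polynomial.derivative^[j] v₁).eval 0 -
        (Polynomial.derivative^[j] v₂).eval 0) ^ 2
  have hp1 : (0:ℝ) < (p:ℝ) + 1 := by positivity
  nlinarith [step1, step2, step3, mul_nonneg hC₁pos.le hS, mul_nonneg hp1.le hX]
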